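/- For positive integers k < n, the k-tuple total restrained domination number of the complete graph K_n equals n if n ≤ 2k+1, and equals k+1 if n ≥ 2k+2. -/

import Mathlib

open SimpleGraph

/-- `S` is a `k`-tuple total restrained dominating set of `G`: every vertex has at
least `k` neighbors in `S`, and every vertex outside `S` has at least `k` neighbors
outside `S`. -/
def IsKTRDS {V : Type*} (G : SimpleGraph V) (k : ℕ) (S : Set V) : Prop :=
  (∀ v : V, k ≤ (S ∩ G.neighborSet v).ncard) ∧
  (∀ v : V, v ∉ S → k ≤ (Sᶜ ∩ G.neighborSet v).ncard)

/-- `S` is a `k`-tuple total dominating set of `G`. -/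
def IsKTDS {V : Type*} (G : SimpleGraph V) (k : ℕ) (S : Set V) : Prop :=
  ∀ v : V, k ≤ (S ∩ G.neighborSet v).ncard

/-- The `k`-tuple total restrained domination number of `G`. -/
noncomputable def ktrdNum {V : Type*} (G : SimpleGraph V) (k : ℕ) : ℕ :=
  sInf {m | ∃ S : Set V, IsKTRDS G k S ∧ S.ncard = m}

/-- The `k`-tuple total domination number of `G`. -/
noncomputable def ktNum {V : Type*} (G : SimpleGraph V) (k : ℕ) : ℕ :=
  sInf {m | ∃ S : Set V, IsKTDS G k S ∧ S.ncard = m}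

/-- The `k`-tuple total restrained domatic number of `G`. -/
noncomputable def ktrdDomatic {V : Type*} (G : SimpleGraph V) (k : ℕ) : ℕ :=
  sSup {d | ∃ f : Fin d → Set V, (∀ i, IsKTRDS G k (f i)) ∧ ∀ v : V, ∃! i, v ∈ f i}

/-- The `k`-tuple total domatic number of `G`. -/
noncomputable def ktDomatic {V : Type*} (G : SimpleGraph V) (k : ℕ) : ℕ :=
  sSup {d | ∃ f : Fin d → Set V, (∀ i, IsKTDS G k (f i)) ∧ ∀ v : V, ∃! i, v ∈ f i}

lemma nbr_top {n : ℕ} (S : Set (Fin n)) (v : Fin n) :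
    S ∩ (⊤ : SimpleGraph (Fin n)).neighborSet v = S \ {v} := by
  ext w
  simp [SimpleGraph.neighborSet, Set.mem_diff, ne_comm]

lemma compl_card {n : ℕ} (S : Set (Fin n)) : S.ncard + Sᶜ.ncard = n := by
  rw [Set.ncard_add_ncard_compl]; simp

lemma lower_bd {k n : ℕ} (hk : 1 ≤ k) (S : Set (Fin n))
    (hS : IsKTRDS (⊤ : SimpleGraph (Fin n)) k S) (hn : 0 < n) : k + 1 ≤ S.ncard := by
  obtain ⟨v0⟩ : Nonempty (Fin n) := ⟨⟨0, hn⟩⟩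
  have h1 := hS.1 v0
  rw [nbr_top] at h1
  have hle : (S \ {v0}).ncard ≤ S.ncard := Set.ncard_le_ncard (Set.diff_subset) (Set.toFinite _)
  have hS1 : 1 ≤ S.ncard := le_trans hk (le_trans h1 hle)
  obtain ⟨v, hv⟩ : S.Nonempty := Set.nonempty_of_ncard_ne_zero (by omega)
  have h2 := hS.1 v
  rw [nbr_top, Set.ncard_diff_singleton_of_mem hv] at h2
  omega

lemma upper_bd {k n : ℕ} (S : Set (Fin n)) (v : Fin n) (hv : v ∉ S)
    (hS : IsKTRDS (⊤ : SimpleGraph (Fin n)) k S) : S.ncard + (k + 1) ≤ n := by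
  have h2 := hS.2 v hv
  rw [nbr_top, Set.ncard_diff_singleton_of_mem (show v ∈ Sᶜ by simpa using hv)] at h2
  have := compl_card S
  have h1 : 1 ≤ Sᶜ.ncard := Set.ncard_pos (Set.toFinite _) |>.2 ⟨v, by simpa using hv⟩
  omega

theorem stmt_0 (k n : ℕ) (hk : 1 ≤ k) (hkn : k < n) :
    ktrdNum (⊤ : SimpleGraph (Fin n)) k = if n ≤ 2 * k + 1 then n else k + 1 := by
  have hn : 0 < n := by omega
  by_cases hcase : n ≤ 2 * k + 1
  · rw [if_pos hcase]
    have huniv : IsKTRDS (⊤ : SimpleGraph (Fin n)) k (Set.univ : Set (Fin n)) := by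
      constructor
      · intro v
        rw [nbr_top]
        have : ((Set.univ : Set (Fin n)) \ {v}).ncard = n - 1 := by
          rw [Set.ncard_diff_singleton_of_mem (Set.mem_univ v)]
          simp [Set.ncard_univ]
        omega
      · intro v hv; exact absurd (Set.mem_univ v) hv
    have hmem : n ∈ {m | ∃ S : Set (Fin n), IsKTRDS (⊤ : SimpleGraph (Fin n)) k S ∧ S.ncard = m} :=
      ⟨Set.univ, huniv, by simp [Set.ncard_univ]⟩
    apply le_antisymm
    · exact Nat.sInf_le hmem
    · apply le_csInf ⟨n, hmem⟩
      rintro m ⟨S, hS, rfl⟩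
      by_cases hSu : S = Set.univ
      · subst hSu; simp [Set.ncard_univ]
      · obtain ⟨v, hv⟩ : ∃ v, v ∉ S := by
          by_contra h; push_neg at h; exact hSu (Set.eq_univ_of_forall h)
        have := upper_bd S v hv hS
        have := lower_bd hk S hS hn
        omega
  · rw [if_neg hcase]
    push_neg at hcase
    -- construct S of size k+1
    have hk1n : k + 1 ≤ n := by omega
    set F : Finset (Fin n) := Finset.map (Fin.castLEEmb hk1n) Finset.univ with hF
    have hFcard : (F : Set (Fin n)).ncard = k + 1 := by
      rw [Set.ncard_coe_finset]; simp [hF]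
    have hSk : IsKTRDS (⊤ : SimpleGraph (Fin n)) k (F : Set (Fin n)) := by
      constructor
      · intro v
        rw [nbr_top]
        by_cases hv : v ∈ (F : Set (Fin n))
        · rw [Set.ncard_diff_singleton_of_mem hv, hFcard]; omega
        · rw [Set.diff_singleton_eq_self hv, hFcard]; omega
      · intro v hv
        rw [nbr_top, Set.ncard_diff_singleton_of_mem (show v ∈ (F : Set (Fin n))ᶜ by simpa using hv)]
        have := compl_card (F : Set (Fin n))
        omega
    have hmem : k + 1 ∈ {m | ∃ S : Set (Fin n),
        IsKTRDS (⊤ : SimpleGraph (Fin n)) k S ∧ S.ncard = m} := ⟨F, hSk, hFcard⟩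
    apply le_antisymm
    · exact Nat.sInf_le hmem
    · apply le_csInf ⟨k + 1, hmem⟩
      rintro m ⟨S, hS, rfl⟩
      exact lower_bd hk S hS hn
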